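/- Let γ be a standard real-valued Gaussian random variable (law N(0,1)) and fix Δt₀ ∈ (0,∞). Then there exists a constant C ∈ (0,∞) such that for all x ∈ ℝ^d and all Δt ∈ (0,Δt₀): (a) (𝔼[‖φ(√Δt γ, x) − Φ(√Δt γ, x)‖²])^{1/2} ≤ C Δt^{3/2}; and (b) if in addition for every x the mappings t ↦ φ(t,x) and t ↦ Φ(t,x) are of class C⁴ with sup_x |∂_t³φ(t,x)| + sup_x |∂_t⁴φ(t,x)| + sup_x |∂_t³Φ(t,x)| + sup_x |∂_t⁴Φ(t,x)| ≤ e^{C'|t|} for some C' ∈ (0,∞) and all t ∈ ℝ, then ‖𝔼[φ(√Δt γ, x)] − 𝔼[Φ(√Δt γ, x)]‖ ≤ C Δt². -/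

import Mathlib

open MeasureTheory ProbabilityTheory Real Set

open Filter Topology

lemma aux_idw {E : Type*} [NormedAddCommGroup E] [NormedSpace ℝ E] {f : ℝ → E}
    (hf : ContDiff ℝ 4 f) {s : Set ℝ} (hs : UniqueDiffOn ℝ s) :
    ∀ (k : ℕ), k ≤ 4 → ∀ x ∈ s, iteratedDerivWithin k f s x = iteratedDeriv k f x := by
  intro k
  induction k with
  | zero => intro _ x hx; simp
  | succ k ih =>
    intro hk x hx
    rw [iteratedDerivWithin_succ, iteratedDeriv_succ,
      derivWithin_congr (fun y hy => ih (by omega) y hy) (ih (by omega) x hx)]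
    exact (hf.differentiable_iteratedDeriv k (by exact_mod_cast (by omega : k < 4))).differentiableAt.derivWithin (hs.uniqueDiffWithinAt hx)

lemma aux_key {E : Type*} [NormedAddCommGroup E] [NormedSpace ℝ E] {f : ℝ → E}
    (hf : ContDiff ℝ 4 f) {C C' : ℝ} (hC : 0 < C) (hC' : 0 < C')
    (hord : ∀ t, ‖f t‖ ≤ C * |t| ^ 3 * Real.exp (C * |t|))
    (h3 : ∀ t, ‖iteratedDeriv 3 f t‖ ≤ Real.exp (C' * |t|))
    (h4 : ∀ t, ‖iteratedDeriv 4 f t‖ ≤ Real.exp (C' * |t|)) :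
    ∀ t : ℝ, ‖f t - (t ^ 3 / 6) • iteratedDeriv 3 f 0‖ ≤ Real.exp (C' * |t|) * t ^ 4 / 6 := by
  have f0 : f 0 = 0 := by
    have h := hord 0
    simpa using h
  set v1 : E := deriv f 0 with hv1
  set v2 : E := iteratedDeriv 2 f 0 with hv2
  set v3 : E := iteratedDeriv 3 f 0 with hv3
  set K : ℝ := C * Real.exp C + Real.exp C' with hK
  have hu : UniqueDiffOn ℝ (Icc (0:ℝ) 1) := uniqueDiffOn_Icc one_pos
  have heq := aux_idw hf hu
  have hpoly2 : ∀ t : ℝ, taylorWithinEval f 2 (Icc (0:ℝ) 1) 0 t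
      = t • v1 + ((2:ℝ)⁻¹ * t ^ 2) • v2 := by
    intro t
    rw [taylor_within_apply]
    have h0 : (0:ℝ) ∈ Icc (0:ℝ) 1 := by norm_num
    rw [Finset.sum_range_succ, Finset.sum_range_succ, Finset.sum_range_one,
      heq 0 (by norm_num) 0 h0, heq 1 (by norm_num) 0 h0, heq 2 (by norm_num) 0 h0]
    simp [f0, Nat.factorial]
    rfl
  have hsmall : ∀ t ∈ Ioc (0:ℝ) 1, ‖t • v1 + ((2:ℝ)⁻¹ * t ^ 2) • v2‖ ≤ K * t ^ 3 := by
    intro t ht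
    have htm : t ∈ Icc (0:ℝ) 1 := ⟨le_of_lt ht.1, ht.2⟩
    have hrem : ‖f t - taylorWithinEval f 2 (Icc (0:ℝ) 1) 0 t‖ ≤ Real.exp C' * t ^ 3 / 2 := by
      have hb : ∀ y ∈ Icc (0:ℝ) 1, ‖iteratedDerivWithin 3 f (Icc (0:ℝ) 1) y‖ ≤ Real.exp C' := by
        intro y hy
        rw [heq 3 (by norm_num) y hy]
        refine (h3 y).trans (Real.exp_le_exp.mpr ?_)
        have : |y| ≤ 1 := abs_le.mpr ⟨by linarith [hy.1], hy.2⟩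
        nlinarith
      have := taylor_mean_remainder_bound (n := 2) (by norm_num : (0:ℝ) ≤ 1)
        (hf.of_le (by norm_num)).contDiffOn htm hb
      simpa [Nat.factorial] using this
    have hft : ‖f t‖ ≤ C * Real.exp C * t ^ 3 := by
      have := hord t
      rw [abs_of_pos ht.1] at this
      have hexp : Real.exp (C * t) ≤ Real.exp C :=
        Real.exp_le_exp.mpr (by nlinarith [ht.1, ht.2])
      have h2 : C * t ^ 3 * Real.exp (C * t) ≤ C * t ^ 3 * Real.exp C := by
        exact mul_le_mul_of_nonneg_left hexp (mul_nonneg hC.le (pow_nonneg ht.1.le 3))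
      nlinarith
    have hid : t • v1 + ((2:ℝ)⁻¹ * t ^ 2) • v2
        = (taylorWithinEval f 2 (Icc (0:ℝ) 1) 0 t - f t) + f t := by
      rw [hpoly2]; abel
    rw [hid]
    calc ‖(taylorWithinEval f 2 (Icc (0:ℝ) 1) 0 t - f t) + f t‖
        ≤ ‖taylorWithinEval f 2 (Icc (0:ℝ) 1) 0 t - f t‖ + ‖f t‖ := norm_add_le _ _
      _ ≤ Real.exp C' * t ^ 3 / 2 + C * Real.exp C * t ^ 3 := by
          rw [norm_sub_rev]; exact add_le_add hrem hft
      _ ≤ K * t ^ 3 := by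
          rw [hK]; nlinarith [pow_pos ht.1 3, Real.exp_pos C']
  have hIocmem : Ioc (0:ℝ) 1 ∈ 𝓝[>] (0:ℝ) :=
    Ioc_mem_nhdsGT_of_mem (by norm_num : (0:ℝ) ∈ Ico (0:ℝ) 1)
  have d1 : v1 = 0 := by
    have h1 : ∀ t ∈ Ioc (0:ℝ) 1, ‖v1 + ((2:ℝ)⁻¹ * t) • v2‖ ≤ K * t ^ 2 := by
      intro t ht
      have h := hsmall t ht
      have hid : t • v1 + ((2:ℝ)⁻¹ * t ^ 2) • v2 = t • (v1 + ((2:ℝ)⁻¹ * t) • v2) := by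
        rw [smul_add, smul_smul]; ring_nf
      rw [hid, norm_smul, Real.norm_eq_abs, abs_of_pos ht.1] at h
      have h' : t * ‖v1 + ((2:ℝ)⁻¹ * t) • v2‖ ≤ t * (K * t ^ 2) := h.trans_eq (by ring)
      exact le_of_mul_le_mul_left h' ht.1
    have hlim1 : Tendsto (fun t : ℝ => K * t ^ 2) (𝓝[>] 0) (𝓝 0) := by
      have hc : Continuous (fun t : ℝ => K * t ^ 2) := continuous_const.mul (continuous_pow 2)
      exact (hc.tendsto' (0:ℝ) 0 (by simp)).mono_left nhdsWithin_le_nhds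
    have hlim2 : Tendsto (fun t : ℝ => ‖v1 + ((2:ℝ)⁻¹ * t) • v2‖) (𝓝[>] 0) (𝓝 ‖v1‖) := by
      have hc : Continuous fun t : ℝ => ‖v1 + ((2:ℝ)⁻¹ * t) • v2‖ :=
        (continuous_const.add ((continuous_const.mul continuous_id).smul
          continuous_const)).norm
      simpa using (hc.tendsto (0:ℝ)).mono_left nhdsWithin_le_nhds
    have : ‖v1‖ ≤ 0 := by
      refine le_of_tendsto_of_tendsto hlim2 hlim1 ?_
      filter_upwards [hIocmem] with t ht using h1 t ht
    exact norm_le_zero_iff.mp this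
  have d2 : v2 = 0 := by
    have h2 : ∀ t ∈ Ioc (0:ℝ) 1, ‖v2‖ ≤ (2 * K) * t := by
      intro t ht
      have h := hsmall t ht
      rw [d1, smul_zero, zero_add, norm_smul, Real.norm_eq_abs] at h
      have habs : |(2:ℝ)⁻¹ * t ^ 2| = (2:ℝ)⁻¹ * t ^ 2 := abs_of_nonneg (by positivity)
      rw [habs] at h
      have h' : ((2:ℝ)⁻¹ * t ^ 2) * ‖v2‖ ≤ ((2:ℝ)⁻¹ * t ^ 2) * ((2 * K) * t) :=
        h.trans_eq (by ring)
      exact le_of_mul_le_mul_left h' (mul_pos (by norm_num) (pow_pos ht.1 2))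
    have hlim1 : Tendsto (fun t : ℝ => (2 * K) * t) (𝓝[>] 0) (𝓝 0) := by
      have hc : Continuous (fun t : ℝ => (2 * K) * t) := continuous_const.mul continuous_id
      exact (hc.tendsto' (0:ℝ) 0 (by simp)).mono_left nhdsWithin_le_nhds
    have : ‖v2‖ ≤ 0 := by
      refine le_of_tendsto_of_tendsto tendsto_const_nhds hlim1 ?_
      filter_upwards [hIocmem] with t ht using h2 t ht
    exact norm_le_zero_iff.mp this
  intro t
  rcases lt_trichotomy t 0 with htn | rfl | htp
  · -- t < 0 : reflect
    set g : ℝ → E := fun s => f (-s) with hg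
    have hgc : ContDiff ℝ 4 g := hf.comp contDiff_neg
    set b : ℝ := -t with hb
    have hbpos : 0 < b := by simp [hb]; linarith
    have hub : UniqueDiffOn ℝ (Icc (0:ℝ) b) := uniqueDiffOn_Icc hbpos
    have heqb := aux_idw hgc hub
    have hbm : b ∈ Icc (0:ℝ) b := ⟨le_of_lt hbpos, le_refl b⟩
    have hbd : ∀ y ∈ Icc (0:ℝ) b, ‖iteratedDerivWithin 4 g (Icc (0:ℝ) b) y‖
        ≤ Real.exp (C' * |t|) := by
      intro y hy
      rw [heqb 4 (by norm_num) y hy]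
      have : iteratedDeriv 4 g y = ((-1 : ℝ) ^ 4) • iteratedDeriv 4 f (-y) :=
        iteratedDeriv_comp_neg 4 f y
      rw [this]
      simp only [norm_smul]
      refine le_trans ?_ (le_refl _)
      have h4y := h4 (-y)
      have : ‖((-1:ℝ) ^ 4)‖ * ‖iteratedDeriv 4 f (-y)‖ = ‖iteratedDeriv 4 f (-y)‖ := by
        norm_num
      rw [this]
      refine (h4 (-y)).trans (Real.exp_le_exp.mpr ?_)
      have h1 : |(-y)| ≤ |t| := by
        rw [abs_neg, abs_of_nonneg hy.1, abs_of_neg htn]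
        exact hy.2
      nlinarith
    have hrem := taylor_mean_remainder_bound (n := 3) (le_of_lt hbpos)
      hgc.contDiffOn hbm hbd
    have hpoly : taylorWithinEval g 3 (Icc (0:ℝ) b) 0 b = (t ^ 3 / 6) • v3 := by
      rw [taylor_within_apply]
      have h0 : (0:ℝ) ∈ Icc (0:ℝ) b := ⟨le_refl 0, le_of_lt hbpos⟩
      rw [Finset.sum_range_succ, Finset.sum_range_succ, Finset.sum_range_succ,
        Finset.sum_range_one, heqb 0 (by norm_num) 0 h0, heqb 1 (by norm_num) 0 h0,
        heqb 2 (by norm_num) 0 h0, heqb 3 (by norm_num) 0 h0]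
      have e0 : g 0 = 0 := by simp [hg, f0]
      have e1 : deriv g 0 = -v1 := by
        have h := iteratedDeriv_comp_neg 1 f (0:ℝ)
        simp only [iteratedDeriv_one, neg_zero, pow_one, neg_one_smul] at h
        exact h
      have e2 : iteratedDeriv 2 g 0 = v2 := by
        have h := iteratedDeriv_comp_neg 2 f (0:ℝ)
        simp only [neg_zero] at h
        rw [h]; norm_num
        exact hv2.symm
      have e3 : iteratedDeriv 3 g 0 = -v3 := by
        have h := iteratedDeriv_comp_neg 3 f (0:ℝ)
        simp only [neg_zero] at h
        rw [h]; norm_num [neg_one_smul]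
        exact hv3.symm
      rw [iteratedDeriv_zero, iteratedDeriv_one, e0, e1, e2, e3, d1, d2]
      simp only [smul_zero, neg_zero, zero_add, add_zero, sub_zero, hb]
      have h6 : ((Nat.factorial 3 : ℕ) : ℝ) = 6 := by norm_num [Nat.factorial]
      rw [h6]
      module
    have hgb : g b = f t := by simp [hg, hb]
    rw [hgb, hpoly] at hrem
    refine hrem.trans ?_
    have : (b - 0) ^ (3 + 1) = t ^ 4 := by rw [hb]; ring
    rw [this]
    norm_num [Nat.factorial]
  · -- t = 0
    simp [f0]
  · -- t > 0
    have hut : UniqueDiffOn ℝ (Icc (0:ℝ) t) := uniqueDiffOn_Icc htp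
    have heqt := aux_idw hf hut
    have htm : t ∈ Icc (0:ℝ) t := ⟨le_of_lt htp, le_refl t⟩
    have hbd : ∀ y ∈ Icc (0:ℝ) t, ‖iteratedDerivWithin 4 f (Icc (0:ℝ) t) y‖
        ≤ Real.exp (C' * |t|) := by
      intro y hy
      rw [heqt 4 (by norm_num) y hy]
      refine (h4 y).trans (Real.exp_le_exp.mpr ?_)
      have h1 : |y| ≤ |t| := by
        rw [abs_of_nonneg hy.1, abs_of_pos htp]; exact hy.2
      nlinarith
    have hrem := taylor_mean_remainder_bound (n := 3) (le_of_lt htp)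
      hf.contDiffOn htm hbd
    have hpoly : taylorWithinEval f 3 (Icc (0:ℝ) t) 0 t = (t ^ 3 / 6) • v3 := by
      rw [taylor_within_apply]
      have h0 : (0:ℝ) ∈ Icc (0:ℝ) t := ⟨le_refl 0, le_of_lt htp⟩
      rw [Finset.sum_range_succ, Finset.sum_range_succ, Finset.sum_range_succ,
        Finset.sum_range_one, heqt 0 (by norm_num) 0 h0, heqt 1 (by norm_num) 0 h0,
        heqt 2 (by norm_num) 0 h0, heqt 3 (by norm_num) 0 h0]
      rw [iteratedDeriv_zero, iteratedDeriv_one, f0, ← hv1, ← hv2, ← hv3, d1, d2]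
      simp only [smul_zero, zero_add, add_zero, sub_zero]
      have h6 : ((Nat.factorial 3 : ℕ) : ℝ) = 6 := by norm_num [Nat.factorial]
      rw [h6]
      module
    rw [hpoly] at hrem
    refine hrem.trans ?_
    have : (t - 0) ^ (3 + 1) = t ^ 4 := by ring
    rw [this]
    norm_num [Nat.factorial]


lemma aux_iter_sub {E : Type*} [NormedAddCommGroup E] [NormedSpace ℝ E] {f g : ℝ → E}
    (hf : ContDiff ℝ 4 f) (hg : ContDiff ℝ 4 g) (k : ℕ) (hk : k ≤ 4) (x : ℝ) :
    iteratedDeriv k (fun t => f t - g t) x = iteratedDeriv k f x - iteratedDeriv k g x := by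
  have hk' : (k : WithTop ℕ∞) ≤ 4 := by exact_mod_cast hk
  have h1 : (fun t => f t - g t) = fun t => f t + (fun s => -(g s)) t := by
    funext t; simp [sub_eq_add_neg]
  rw [h1]
  have hadd : iteratedDeriv k (fun t => f t + (fun s => -(g s)) t) x
      = iteratedDeriv k f x + iteratedDeriv k (fun s => -(g s)) x := by
    rw [iteratedDeriv_eq_iteratedFDeriv, iteratedDeriv_eq_iteratedFDeriv,
      iteratedDeriv_eq_iteratedFDeriv,
      iteratedFDeriv_add_apply' (hf.of_le hk').contDiffAt ((hg.neg).of_le hk').contDiffAt]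
    simp
  rw [hadd, iteratedDeriv_fun_neg, sub_eq_add_neg]

lemma aux_gauss_int (b : ℝ) :
    Integrable (fun y : ℝ => Real.exp (b * |y|)) (gaussianReal 0 1) := by
  rw [gaussianReal_of_var_ne_zero 0 one_ne_zero]
  rw [integrable_withDensity_iff (measurable_gaussianPDF 0 1)
    (ae_of_all _ fun x => ENNReal.ofReal_lt_top)]
  have hpdf : ∀ y : ℝ, (gaussianPDF 0 1 y).toReal = gaussianPDFReal 0 1 y := fun y =>
    ENNReal.toReal_ofReal (gaussianPDFReal_nonneg 0 1 y)
  have hmeas : AEStronglyMeasurable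
      (fun y : ℝ => Real.exp (b * |y|) * (gaussianPDF 0 1 y).toReal) volume := by
    refine Measurable.aestronglyMeasurable ?_
    exact ((measurable_abs.const_mul b).exp).mul (measurable_gaussianPDF 0 1).ennreal_toReal
  refine Integrable.mono'
    (g := fun y : ℝ => ((Real.sqrt (2 * π))⁻¹ * Real.exp (b ^ 2)) * Real.exp (-4⁻¹ * y ^ 2))
    (((integrable_exp_neg_mul_sq (by norm_num : (0:ℝ) < 4⁻¹)).const_mul _)) hmeas
    (ae_of_all _ ?_)
  intro y
  beta_reduce
  rw [Real.norm_eq_abs, abs_of_nonneg (mul_nonneg (Real.exp_pos _).le ENNReal.toReal_nonneg),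
    hpdf y]
  have hpi : 0 < Real.sqrt (2 * π) := Real.sqrt_pos.mpr (by positivity)
  have h1 : gaussianPDFReal 0 1 y = (Real.sqrt (2 * π))⁻¹ * Real.exp (- y ^ 2 / 2) := by
    simp [gaussianPDFReal]
  rw [h1]
  have h2 : Real.exp (b * |y|) * ((Real.sqrt (2 * π))⁻¹ * Real.exp (- y ^ 2 / 2))
      = (Real.sqrt (2 * π))⁻¹ * Real.exp (b * |y| + (- y ^ 2 / 2)) := by
    rw [Real.exp_add]; ring
  rw [h2, mul_assoc]
  refine mul_le_mul_of_nonneg_left ?_ (by positivity)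
  rw [← Real.exp_add]
  refine Real.exp_le_exp.mpr ?_
  nlinarith [sq_nonneg (|y| - 2 * b), sq_abs y]

lemma aux_gauss_cube : ∫ y : ℝ, y ^ 3 ∂(gaussianReal 0 1) = 0 := by
  have hint : Integrable (fun y : ℝ => y ^ 3) (gaussianReal 0 1) := by
    refine Integrable.mono' (aux_gauss_int 3)
      (measurable_id.pow_const 3).aestronglyMeasurable (ae_of_all _ fun y => ?_)
    rw [Real.norm_eq_abs, abs_pow]
    calc |y| ^ 3 ≤ (Real.exp |y|) ^ 3 :=
          pow_le_pow_left₀ (abs_nonneg y) (le_trans (by linarith [abs_nonneg y]) 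
            (Real.add_one_le_exp |y|)) 3
      _ = Real.exp (3 * |y|) := by rw [← Real.exp_nat_mul]; norm_num
  have hmap : Measure.map (fun y : ℝ => -y) (gaussianReal 0 1) = gaussianReal 0 1 := by
    have h := gaussianReal_map_const_mul (μ := 0) (v := 1) (-1 : ℝ)
    have h2 : (fun y : ℝ => -1 * y) = fun y : ℝ => -y := by funext y; ring
    rw [h2] at h
    rw [h]
    norm_num
  have hm : AEStronglyMeasurable (fun y : ℝ => y ^ 3)
      (Measure.map (fun y : ℝ => -y) (gaussianReal 0 1)) :=
    (measurable_id.pow_const 3).aestronglyMeasurable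
  have h := integral_map (μ := gaussianReal 0 1) (φ := fun y : ℝ => -y)
    measurable_neg.aemeasurable hm
  rw [hmap] at h
  have h2 : ∫ y : ℝ, (-y) ^ 3 ∂(gaussianReal 0 1) = - ∫ y : ℝ, y ^ 3 ∂(gaussianReal 0 1) := by
    rw [← integral_neg]
    congr 1
    funext y
    ring
  rw [h2] at h
  linarith

section helpers
variable {E : Type*} [NormedAddCommGroup E] [NormedSpace ℝ E]

lemma aux_pow_exp (u : ℝ) (n : ℕ) : |u| ^ n ≤ Real.exp (n * |u|) := by
  calc |u| ^ n ≤ (Real.exp |u|) ^ n :=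
        pow_le_pow_left₀ (abs_nonneg u)
          (le_trans (by linarith [abs_nonneg u]) (Real.add_one_le_exp |u|)) n
    _ = Real.exp (n * |u|) := (Real.exp_nat_mul _ n).symm

end helpers

set_option maxHeartbeats 1000000

/-- **Lemma (local error estimates under Gaussian input).** With `γ ~ N(0,1)` and
`Δt₀ ∈ (0,∞)`, there is `C ∈ (0,∞)` such that for all `x` and `Δt ∈ (0,Δt₀)`:
(a) `(𝔼[‖φ(√Δt γ, x) − Φ(√Δt γ, x)‖²])^{1/2} ≤ C Δt^{3/2}`; and (b) if in addition
`t ↦ φ(t,x)` and `t ↦ Φ(t,x)` are `C⁴` with exponentially bounded third and fourth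
derivatives, then `‖𝔼[φ(√Δt γ, x)] − 𝔼[Φ(√Δt γ, x)]‖ ≤ C Δt²`. -/
theorem gaussian_local_error
    {d : ℕ} {Ω : Type*} [MeasurableSpace Ω] (P : Measure Ω) [IsProbabilityMeasure P]
    (σ : EuclideanSpace ℝ (Fin d) → EuclideanSpace ℝ (Fin d))
    (hσ : ContDiff ℝ 3 σ) (Cσ : ℝ)
    (hσbd : ∀ k : ℕ, k ≤ 3 → ∀ x, ‖iteratedFDeriv ℝ k σ x‖ ≤ Cσ)
    (φ : ℝ → EuclideanSpace ℝ (Fin d) → EuclideanSpace ℝ (Fin d))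
    (hφ0 : ∀ x, φ 0 x = x)
    (hφd : ∀ (t : ℝ) (x : EuclideanSpace ℝ (Fin d)),
      HasDerivAt (fun s => φ s x) (σ (φ t x)) t)
    (Φ : ℝ → EuclideanSpace ℝ (Fin d) → EuclideanSpace ℝ (Fin d))
    (hΦreg : ContDiff ℝ 3 (fun q : ℝ × EuclideanSpace ℝ (Fin d) => Φ q.1 q.2))
    (C : ℝ) (hCpos : 0 < C)
    (hΦord : ∀ (t : ℝ) x, ‖Φ t x - φ t x‖ ≤ C * |t| ^ 3 * Real.exp (C * |t|))
    (hΦlip : ∀ (t₁ t₂ : ℝ) (x₁ x₂ : EuclideanSpace ℝ (Fin d)),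
      ‖Φ t₂ x₂ - Φ t₁ x₁‖ ≤ C * (|t₂ - t₁| + ‖x₂ - x₁‖) * Real.exp (C * (|t₁| + |t₂|)))
    (hΦder : ∀ k : ℕ, k ≤ 3 → ∀ (t : ℝ) (x : EuclideanSpace ℝ (Fin d)),
      ‖iteratedFDeriv ℝ k (fun q : ℝ × EuclideanSpace ℝ (Fin d) => Φ q.1 q.2) (t, x)‖
        ≤ C * Real.exp (C * |t|))
    (γ : Ω → ℝ) (hγmeas : Measurable γ)
    (hγ : Measure.map γ P = gaussianReal 0 1)
    (Δt₀ : ℝ) (hΔt₀ : 0 < Δt₀) :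
    ∃ CC : ℝ, 0 < CC ∧
      (∀ (x : EuclideanSpace ℝ (Fin d)), ∀ Δt ∈ Ioo (0:ℝ) Δt₀,
        (∫ ω, ‖φ (Real.sqrt Δt * γ ω) x - Φ (Real.sqrt Δt * γ ω) x‖ ^ (2 : ℝ) ∂P)
            ^ ((1 : ℝ) / 2)
          ≤ CC * Δt ^ ((3 : ℝ) / 2)) ∧
      (((∀ x, ContDiff ℝ 4 (fun t : ℝ => φ t x) ∧ ContDiff ℝ 4 (fun t : ℝ => Φ t x)) ∧
          ∃ C' : ℝ, 0 < C' ∧ ∀ (t : ℝ) (x : EuclideanSpace ℝ (Fin d)),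
            ‖iteratedDeriv 3 (fun s => φ s x) t‖ + ‖iteratedDeriv 4 (fun s => φ s x) t‖
              + ‖iteratedDeriv 3 (fun s => Φ s x) t‖ + ‖iteratedDeriv 4 (fun s => Φ s x) t‖
              ≤ Real.exp (C' * |t|)) →
        ∀ (x : EuclideanSpace ℝ (Fin d)), ∀ Δt ∈ Ioo (0:ℝ) Δt₀,
          ‖(∫ ω, φ (Real.sqrt Δt * γ ω) x ∂P) - ∫ ω, Φ (Real.sqrt Δt * γ ω) x ∂P‖
            ≤ CC * Δt ^ 2) := by
  classical
  have hs0 : 0 < Real.sqrt Δt₀ := Real.sqrt_pos.mpr hΔt₀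
  set s0 : ℝ := Real.sqrt Δt₀ with hs0def
  -- transfer of exponential integrability
  have hTrans : ∀ b : ℝ, Integrable (fun ω => Real.exp (b * |γ ω|)) P := by
    intro b
    have h1 : Integrable (fun y : ℝ => Real.exp (b * |y|)) (Measure.map γ P) := by
      rw [hγ]; exact aux_gauss_int b
    have h2 := (integrable_map_measure h1.aestronglyMeasurable hγmeas.aemeasurable).mp h1
    exact h2
  -- third moment of γ vanishes
  have hγcube : ∫ ω, (γ ω) ^ 3 ∂P = 0 := by
    have hm : AEStronglyMeasurable (fun y : ℝ => y ^ 3) (Measure.map γ P) :=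
      (measurable_id.pow_const 3).aestronglyMeasurable
    have h := integral_map (f := fun y : ℝ => y ^ 3) hγmeas.aemeasurable hm
    rw [hγ] at h
    rw [← h]
    exact aux_gauss_cube
  have hγcube_int : Integrable (fun ω => (γ ω) ^ 3) P := by
    refine Integrable.mono' (hTrans 3) (hγmeas.pow_const 3).aestronglyMeasurable
      (ae_of_all _ fun ω => ?_)
    rw [Real.norm_eq_abs, abs_pow]
    simpa using aux_pow_exp (γ ω) 3
  -- constants for part (a)
  set b1 : ℝ := 6 + 2 * C * s0 with hb1def
  set K1 : ℝ := ∫ ω, Real.exp (b1 * |γ ω|) ∂P with hK1def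
  have hK1 : 0 ≤ K1 := integral_nonneg fun ω => (Real.exp_pos _).le
  -- part (a) with the explicit constant
  have parta : ∀ (x : EuclideanSpace ℝ (Fin d)), ∀ Δt ∈ Ioo (0:ℝ) Δt₀,
      (∫ ω, ‖φ (Real.sqrt Δt * γ ω) x - Φ (Real.sqrt Δt * γ ω) x‖ ^ (2 : ℝ) ∂P)
          ^ ((1 : ℝ) / 2)
        ≤ Real.sqrt (C ^ 2 * K1) * Δt ^ ((3 : ℝ) / 2) := by
    intro x Δt hΔt
    have hsle : Real.sqrt Δt ≤ s0 := Real.sqrt_le_sqrt hΔt.2.le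
    have hptw : ∀ ω, ‖φ (Real.sqrt Δt * γ ω) x - Φ (Real.sqrt Δt * γ ω) x‖ ^ (2 : ℝ)
        ≤ (C ^ 2 * Δt ^ 3) * Real.exp (b1 * |γ ω|) := by
      intro ω
      set t : ℝ := Real.sqrt Δt * γ ω with htdef
      have habs : |t| = Real.sqrt Δt * |γ ω| := by
        rw [htdef, abs_mul, abs_of_nonneg (Real.sqrt_nonneg _)]
      have h0 : ‖φ t x - Φ t x‖ ≤ C * |t| ^ 3 * Real.exp (C * |t|) := by
        rw [norm_sub_rev]; exact hΦord t x
      have hr : ‖φ t x - Φ t x‖ ^ (2:ℝ) = ‖φ t x - Φ t x‖ ^ (2:ℕ) := by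
        rw [show ((2:ℝ)) = ((2:ℕ):ℝ) by norm_num, Real.rpow_natCast]
      rw [hr]
      have h1 : ‖φ t x - Φ t x‖ ^ (2:ℕ) ≤ (C * |t| ^ 3 * Real.exp (C * |t|)) ^ 2 :=
        pow_le_pow_left₀ (norm_nonneg _) h0 2
      refine h1.trans ?_
      have ht6 : |t| ^ 6 ≤ Δt ^ 3 * Real.exp (6 * |γ ω|) := by
        have hg6 : |γ ω| ^ 6 ≤ Real.exp (6 * |γ ω|) := by simpa using aux_pow_exp (γ ω) 6
        have hsq : (Real.sqrt Δt) ^ 6 = Δt ^ 3 := by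
          rw [show 6 = 2 * 3 by norm_num, pow_mul, Real.sq_sqrt hΔt.1.le]
        rw [habs, mul_pow, hsq]
        exact mul_le_mul_of_nonneg_left hg6 (pow_nonneg hΔt.1.le 3)
      have htle : |t| ≤ s0 * |γ ω| := by
        rw [habs]; exact mul_le_mul_of_nonneg_right hsle (abs_nonneg _)
      calc (C * |t| ^ 3 * Real.exp (C * |t|)) ^ 2
          = C ^ 2 * |t| ^ 6 * (Real.exp (C * |t|) * Real.exp (C * |t|)) := by ring
        _ = C ^ 2 * |t| ^ 6 * Real.exp (C * |t| + C * |t|) := by rw [← Real.exp_add]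
        _ ≤ C ^ 2 * (Δt ^ 3 * Real.exp (6 * |γ ω|)) * Real.exp (2 * C * s0 * |γ ω|) := by
            refine mul_le_mul (mul_le_mul_of_nonneg_left ht6 (sq_nonneg C))
              (Real.exp_le_exp.mpr ?_) (Real.exp_pos _).le
              (mul_nonneg (sq_nonneg C)
                (mul_nonneg (pow_nonneg hΔt.1.le 3) (Real.exp_pos _).le))
            nlinarith [abs_nonneg (γ ω)]
        _ = (C ^ 2 * Δt ^ 3) * (Real.exp (6 * |γ ω|) * Real.exp (2 * C * s0 * |γ ω|)) := by
            ring
        _ = (C ^ 2 * Δt ^ 3) * Real.exp (b1 * |γ ω|) := by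
            rw [← Real.exp_add]
            rw [show 6 * |γ ω| + 2 * C * s0 * |γ ω| = b1 * |γ ω| by rw [hb1def]; ring]
    have hnn : 0 ≤ᵐ[P] fun ω =>
        ‖φ (Real.sqrt Δt * γ ω) x - Φ (Real.sqrt Δt * γ ω) x‖ ^ (2:ℝ) :=
      ae_of_all _ fun ω => Real.rpow_nonneg (norm_nonneg _) _
    have hgint : Integrable (fun ω => (C ^ 2 * Δt ^ 3) * Real.exp (b1 * |γ ω|)) P :=
      (hTrans b1).const_mul _
    have hle := integral_mono_of_nonneg hnn hgint (ae_of_all _ hptw)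
    rw [integral_const_mul] at hle
    have hInn : 0 ≤ ∫ ω, ‖φ (Real.sqrt Δt * γ ω) x - Φ (Real.sqrt Δt * γ ω) x‖ ^ (2:ℝ) ∂P :=
      integral_nonneg fun ω => Real.rpow_nonneg (norm_nonneg _) _
    calc (∫ ω, ‖φ (Real.sqrt Δt * γ ω) x - Φ (Real.sqrt Δt * γ ω) x‖ ^ (2:ℝ) ∂P)
            ^ ((1:ℝ)/2)
        ≤ ((C ^ 2 * K1) * Δt ^ 3) ^ ((1:ℝ)/2) :=
          Real.rpow_le_rpow hInn (hle.trans_eq (by ring)) (by norm_num)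
      _ = Real.sqrt (C ^ 2 * K1) * Δt ^ ((3:ℝ)/2) := by
          rw [Real.mul_rpow (mul_nonneg (sq_nonneg C) hK1) (pow_nonneg hΔt.1.le 3)]
          congr 1
          · rw [Real.sqrt_eq_rpow]
          · rw [← Real.rpow_natCast Δt 3, ← Real.rpow_mul hΔt.1.le]
            norm_num
  by_cases hB : ((∀ x, ContDiff ℝ 4 (fun t : ℝ => φ t x) ∧ ContDiff ℝ 4 (fun t : ℝ => Φ t x)) ∧
      ∃ C' : ℝ, 0 < C' ∧ ∀ (t : ℝ) (x : EuclideanSpace ℝ (Fin d)),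
        ‖iteratedDeriv 3 (fun s => φ s x) t‖ + ‖iteratedDeriv 4 (fun s => φ s x) t‖
          + ‖iteratedDeriv 3 (fun s => Φ s x) t‖ + ‖iteratedDeriv 4 (fun s => Φ s x) t‖
          ≤ Real.exp (C' * |t|))
  · -- hypothesis of (b) holds
    obtain ⟨hreg, C', hC'pos, hders⟩ := hB
    set b2 : ℝ := 4 + C' * s0 with hb2def
    set K2 : ℝ := ∫ ω, Real.exp (b2 * |γ ω|) ∂P with hK2def
    have hK2 : 0 ≤ K2 := integral_nonneg fun ω => (Real.exp_pos _).le
    have hCCpos : 0 < max (Real.sqrt (C ^ 2 * K1)) K2 + 1 := by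
      have h1 := Real.sqrt_nonneg (C ^ 2 * K1)
      have h2 := le_max_left (Real.sqrt (C ^ 2 * K1)) K2
      linarith
    refine ⟨max (Real.sqrt (C ^ 2 * K1)) K2 + 1, hCCpos, fun x Δt hΔt => ?_,
      fun _ x Δt hΔt => ?_⟩
    · refine (parta x Δt hΔt).trans
        (mul_le_mul_of_nonneg_right ?_ (Real.rpow_nonneg hΔt.1.le _))
      have h2 := le_max_left (Real.sqrt (C ^ 2 * K1)) K2
      linarith
    · -- part (b)
      have hΦ0 : ∀ y, Φ 0 y = y := by
        intro y
        have h2 : ‖Φ 0 y - φ 0 y‖ ≤ 0 := by simpa using hΦord 0 y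
        have h3 := sub_eq_zero.mp (norm_le_zero_iff.mp h2)
        rw [h3, hφ0]
      set s : ℝ := Real.sqrt Δt with hsdef
      have hspos : 0 < s := Real.sqrt_pos.mpr hΔt.1
      have hsle : s ≤ s0 := Real.sqrt_le_sqrt hΔt.2.le
      have hs2 : s ^ 2 = Δt := Real.sq_sqrt hΔt.1.le
      have hfC : ContDiff ℝ 4 (fun t => φ t x - Φ t x) := (hreg x).1.sub (hreg x).2
      have hford : ∀ t, ‖φ t x - Φ t x‖ ≤ C * |t| ^ 3 * Real.exp (C * |t|) := fun t => by
        rw [norm_sub_rev]; exact hΦord t x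
      have hf3 : ∀ t, ‖iteratedDeriv 3 (fun u => φ u x - Φ u x) t‖ ≤ Real.exp (C' * |t|) := by
        intro t
        rw [aux_iter_sub (hreg x).1 (hreg x).2 3 (by norm_num) t]
        have h := hders t x
        have hn := norm_sub_le (iteratedDeriv 3 (fun u => φ u x) t)
          (iteratedDeriv 3 (fun u => Φ u x) t)
        linarith [norm_nonneg (iteratedDeriv 4 (fun u : ℝ => φ u x) t),
          norm_nonneg (iteratedDeriv 4 (fun u : ℝ => Φ u x) t)]
      have hf4 : ∀ t, ‖iteratedDeriv 4 (fun u => φ u x - Φ u x) t‖ ≤ Real.exp (C' * |t|) := by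
        intro t
        rw [aux_iter_sub (hreg x).1 (hreg x).2 4 (by norm_num) t]
        have h := hders t x
        have hn := norm_sub_le (iteratedDeriv 4 (fun u => φ u x) t)
          (iteratedDeriv 4 (fun u => Φ u x) t)
        linarith [norm_nonneg (iteratedDeriv 3 (fun u : ℝ => φ u x) t),
          norm_nonneg (iteratedDeriv 3 (fun u : ℝ => Φ u x) t)]
      have hkey := aux_key hfC hCpos hC'pos hford hf3 hf4
      set v := iteratedDeriv 3 (fun u => φ u x - Φ u x) 0 with hvdef
      -- measurability
      have hφcont : Continuous fun t => φ t x :=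
        continuous_iff_continuousAt.mpr fun t => (hφd t x).differentiableAt.continuousAt
      have hΦcont : Continuous fun t => Φ t x := by
        have h := hΦreg.continuous.comp
          ((continuous_id.prodMk continuous_const) : Continuous fun t : ℝ => (t, x))
        exact h
      have hγs : AEMeasurable (fun ω => s * γ ω) P := (hγmeas.const_mul s).aemeasurable
      have hmφ : AEStronglyMeasurable (fun ω => φ (s * γ ω) x) P := by
        exact ((hφcont.measurable.comp (hγmeas.const_mul s)).aestronglyMeasurable)
      have hmΦ : AEStronglyMeasurable (fun ω => Φ (s * γ ω) x) P := by
        exact ((hΦcont.measurable.comp (hγmeas.const_mul s)).aestronglyMeasurable)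
      -- pointwise exponential bounds
      have hbΦ' : ∀ u : ℝ, ‖Φ u x - Φ 0 x‖ ≤ C * |u| * Real.exp (C * |u|) := by
        intro u
        have h := hΦlip 0 u x x
        simpa using h
      have hexp_bounds : ∀ ω, C * |s * γ ω| ^ 3 * Real.exp (C * |s * γ ω|)
            ≤ C * Real.exp (((3 + C) * s0) * |γ ω|) ∧
          C * |s * γ ω| * Real.exp (C * |s * γ ω|)
            ≤ C * Real.exp (((3 + C) * s0) * |γ ω|) := by
        intro ω
        set u : ℝ := s * γ ω with hudef
        have habs : |u| = s * |γ ω| := by rw [hudef, abs_mul, abs_of_nonneg hspos.le]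
        have htle : |u| ≤ s0 * |γ ω| := by
          rw [habs]; exact mul_le_mul_of_nonneg_right hsle (abs_nonneg _)
        have e1 : |u| ^ 3 ≤ Real.exp (3 * |u|) := by simpa using aux_pow_exp u 3
        have e2 : |u| ≤ Real.exp (3 * |u|) := by
          refine le_trans (le_trans (by linarith [abs_nonneg u]) (Real.add_one_le_exp |u|))
            (Real.exp_le_exp.mpr (by linarith [abs_nonneg u]))
        have e3 : Real.exp (3 * |u|) * Real.exp (C * |u|) = Real.exp ((3 + C) * |u|) := by
          rw [← Real.exp_add]; ring_nf
        have e4 : Real.exp ((3 + C) * |u|) ≤ Real.exp (((3 + C) * s0) * |γ ω|) :=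
          Real.exp_le_exp.mpr (by nlinarith [abs_nonneg (γ ω)])
        constructor
        · calc C * |u| ^ 3 * Real.exp (C * |u|) = C * (|u| ^ 3 * Real.exp (C * |u|)) := by ring
            _ ≤ C * (Real.exp (3 * |u|) * Real.exp (C * |u|)) :=
                mul_le_mul_of_nonneg_left
                  (mul_le_mul_of_nonneg_right e1 (Real.exp_pos _).le) hCpos.le
            _ ≤ C * Real.exp (((3 + C) * s0) * |γ ω|) := by
                rw [e3]; exact mul_le_mul_of_nonneg_left e4 hCpos.le
        · calc C * |u| * Real.exp (C * |u|) = C * (|u| * Real.exp (C * |u|)) := by ring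
            _ ≤ C * (Real.exp (3 * |u|) * Real.exp (C * |u|)) :=
                mul_le_mul_of_nonneg_left
                  (mul_le_mul_of_nonneg_right e2 (Real.exp_pos _).le) hCpos.le
            _ ≤ C * Real.exp (((3 + C) * s0) * |γ ω|) := by
                rw [e3]; exact mul_le_mul_of_nonneg_left e4 hCpos.le
      have hφint : Integrable (fun ω => φ (s * γ ω) x) P := by
        refine Integrable.mono'
          ((((hTrans ((3 + C) * s0)).const_mul (2 * C)).add (integrable_const ‖x‖))) hmφ
          (ae_of_all _ fun ω => ?_)
        have hb := hexp_bounds ω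
        have h2 := hbΦ' (s * γ ω)
        have h3 := hford (s * γ ω)
        have hid : φ (s * γ ω) x
            = (φ (s * γ ω) x - Φ (s * γ ω) x) + ((Φ (s * γ ω) x - Φ 0 x) + Φ 0 x) := by abel
        have h4 : ‖φ (s * γ ω) x‖ ≤ ‖φ (s * γ ω) x - Φ (s * γ ω) x‖
            + (‖Φ (s * γ ω) x - Φ 0 x‖ + ‖Φ 0 x‖) := by
          conv_lhs => rw [hid]
          exact (norm_add_le _ _).trans (by linarith [norm_add_le (Φ (s * γ ω) x - Φ 0 x) (Φ 0 x)])
        have hx0 : ‖Φ 0 x‖ = ‖x‖ := by rw [hΦ0]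
        have : ‖φ (s * γ ω) x‖ ≤ 2 * C * Real.exp (((3 + C) * s0) * |γ ω|) + ‖x‖ := by
          rw [hx0] at h4
          linarith [hb.1, hb.2]
        simpa using this
      have hΦint : Integrable (fun ω => Φ (s * γ ω) x) P := by
        refine Integrable.mono'
          (((hTrans ((3 + C) * s0)).const_mul C).add (integrable_const ‖x‖)) hmΦ
          (ae_of_all _ fun ω => ?_)
        have hb := (hexp_bounds ω).2
        have h2 := hbΦ' (s * γ ω)
        have hid : Φ (s * γ ω) x = (Φ (s * γ ω) x - Φ 0 x) + Φ 0 x := by abel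
        have h4 : ‖Φ (s * γ ω) x‖ ≤ ‖Φ (s * γ ω) x - Φ 0 x‖ + ‖Φ 0 x‖ := by
          conv_lhs => rw [hid]
          exact norm_add_le _ _
        have hx0 : ‖Φ 0 x‖ = ‖x‖ := by rw [hΦ0]
        have : ‖Φ (s * γ ω) x‖ ≤ C * Real.exp (((3 + C) * s0) * |γ ω|) + ‖x‖ := by
          rw [hx0] at h4; linarith
        simpa using this
      have hvid : (fun ω => ((s * γ ω) ^ 3 / 6) • v)
          = fun ω => ((s ^ 3 / 6) * (γ ω) ^ 3) • v := by
        funext ω; congr 1; ring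
      have hvint : Integrable (fun ω => ((s * γ ω) ^ 3 / 6) • v) P := by
        rw [hvid]; exact (hγcube_int.const_mul _).smul_const v
      have hremint : Integrable
          (fun ω => (φ (s * γ ω) x - Φ (s * γ ω) x) - ((s * γ ω) ^ 3 / 6) • v) P :=
        (hφint.sub hΦint).sub hvint
      have hterm0 : ∫ ω, ((s * γ ω) ^ 3 / 6) • v ∂P = 0 := by
        rw [hvid, integral_smul_const, integral_const_mul, hγcube, mul_zero, zero_smul]
      have hptwb : ∀ ω, ‖(φ (s * γ ω) x - Φ (s * γ ω) x) - ((s * γ ω) ^ 3 / 6) • v‖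
          ≤ Δt ^ 2 * Real.exp (b2 * |γ ω|) := by
        intro ω
        have hk := hkey (s * γ ω)
        refine hk.trans ?_
        set u : ℝ := s * γ ω with hudef
        have habs : |u| = s * |γ ω| := by rw [hudef, abs_mul, abs_of_nonneg hspos.le]
        have hu4 : u ^ 4 = Δt ^ 2 * (γ ω) ^ 4 := by
          rw [hudef, mul_pow, show (4:ℕ) = 2 * 2 by norm_num, pow_mul, hs2]
        have hg4 : (γ ω) ^ 4 ≤ Real.exp (4 * |γ ω|) := by
          have h1 : (γ ω) ^ 4 = |γ ω| ^ 4 := by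
            rw [← abs_pow]; exact (abs_of_nonneg (by positivity)).symm
          rw [h1]; simpa using aux_pow_exp (γ ω) 4
        have hCexp : Real.exp (C' * |u|) ≤ Real.exp ((C' * s0) * |γ ω|) := by
          refine Real.exp_le_exp.mpr ?_
          have htle : |u| ≤ s0 * |γ ω| := by
            rw [habs]; exact mul_le_mul_of_nonneg_right hsle (abs_nonneg _)
          nlinarith [abs_nonneg (γ ω)]
        have hu4nn : (0:ℝ) ≤ u ^ 4 := by positivity
        have step1 : Real.exp (C' * |u|) * u ^ 4 / 6 ≤ Real.exp (C' * |u|) * u ^ 4 := by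
          have h0 : (0:ℝ) ≤ Real.exp (C' * |u|) * u ^ 4 :=
            mul_nonneg (Real.exp_pos _).le hu4nn
          linarith
        refine step1.trans ?_
        calc Real.exp (C' * |u|) * u ^ 4
            = Real.exp (C' * |u|) * (Δt ^ 2 * (γ ω) ^ 4) := by rw [hu4]
          _ ≤ Real.exp ((C' * s0) * |γ ω|) * (Δt ^ 2 * Real.exp (4 * |γ ω|)) := by
              refine mul_le_mul hCexp
                (mul_le_mul_of_nonneg_left hg4 (pow_nonneg hΔt.1.le 2))
                (mul_nonneg (pow_nonneg hΔt.1.le 2) (by positivity)) (Real.exp_pos _).le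
          _ = Δt ^ 2 * Real.exp (b2 * |γ ω|) := by
              rw [show Real.exp ((C' * s0) * |γ ω|) * (Δt ^ 2 * Real.exp (4 * |γ ω|))
                  = Δt ^ 2 * (Real.exp (4 * |γ ω|) * Real.exp ((C' * s0) * |γ ω|)) by ring,
                ← Real.exp_add,
                show 4 * |γ ω| + (C' * s0) * |γ ω| = b2 * |γ ω| by rw [hb2def]; ring]
      have hfe : (fun ω => φ (s * γ ω) x - Φ (s * γ ω) x)
          = fun ω => ((φ (s * γ ω) x - Φ (s * γ ω) x) - ((s * γ ω) ^ 3 / 6) • v)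
              + ((s * γ ω) ^ 3 / 6) • v := by
        funext ω; abel
      calc ‖(∫ ω, φ (s * γ ω) x ∂P) - ∫ ω, Φ (s * γ ω) x ∂P‖
          = ‖∫ ω, (φ (s * γ ω) x - Φ (s * γ ω) x) ∂P‖ := by
            rw [integral_sub hφint hΦint]
        _ = ‖∫ ω, ((φ (s * γ ω) x - Φ (s * γ ω) x) - ((s * γ ω) ^ 3 / 6) • v) ∂P‖ := by
            rw [hfe, integral_add hremint hvint, hterm0, add_zero]
        _ ≤ ∫ ω, ‖(φ (s * γ ω) x - Φ (s * γ ω) x) - ((s * γ ω) ^ 3 / 6) • v‖ ∂P :=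
            norm_integral_le_integral_norm _
        _ ≤ ∫ ω, Δt ^ 2 * Real.exp (b2 * |γ ω|) ∂P :=
            integral_mono_of_nonneg (ae_of_all _ fun ω => norm_nonneg _)
              ((hTrans b2).const_mul _) (ae_of_all _ hptwb)
        _ = Δt ^ 2 * K2 := by rw [integral_const_mul, hK2def]
        _ ≤ (max (Real.sqrt (C ^ 2 * K1)) K2 + 1) * Δt ^ 2 := by
            have h := le_max_right (Real.sqrt (C ^ 2 * K1)) K2
            nlinarith [pow_nonneg hΔt.1.le 2]
  · -- hypothesis of (b) fails
    refine ⟨Real.sqrt (C ^ 2 * K1) + 1, ?_, fun x Δt hΔt => ?_, fun h => absurd h hB⟩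
    · have := Real.sqrt_nonneg (C ^ 2 * K1); linarith
    · refine (parta x Δt hΔt).trans
        (mul_le_mul_of_nonneg_right (by linarith [Real.sqrt_nonneg (C ^ 2 * K1)])
          (Real.rpow_nonneg hΔt.1.le _))
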